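/- For the ALS sequence, f(v_{k+1}) − f(v_k) = −(1/(2‖b‖²)) Σ_{μ=0}^{d−1} ‖Π_{k,μ} r_{k,μ}‖² ≤ 0 where r_{k,μ} = b − v_{k,μ}; hence (f(v_k))_k is nonincreasing and bounded below by −1/2, so it converges to some α ∈ ℝ, and moreover ‖v_{k+1} − v_k‖² ≤ 2d‖b‖² Σ_{μ=0}^{d−1}(f(v_{k,μ}) − f(v_{k,μ+1})), so ‖v_{k+1} − v_k‖ → 0. -/

import Mathlib

/-- The objective function `f(v) = (1/‖b‖²)(½⟨v,v⟩ − ⟨b,v⟩)` on a Euclidean space. -/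
noncomputable def fobj {E : Type*} [NormedAddCommGroup E] [InnerProductSpace ℝ E]
    (b v : E) : ℝ :=
  (1 / ‖b‖ ^ 2) * ((1 / 2) * (inner ℝ v v : ℝ) - (inner ℝ b v : ℝ))


open Filter Topology

lemma fobj_step {E : Type*} [NormedAddCommGroup E] [InnerProductSpace ℝ E]
    (b w : E) (hb : b ≠ 0) (P : E →ₗ[ℝ] E)
    (hsym : ∀ x y : E, (inner ℝ (P x) y : ℝ) = (inner ℝ x (P y) : ℝ))
    (hidem : ∀ x : E, P (P x) = P x) :
    fobj b (w + P (b - w)) = fobj b w - ‖P (b - w)‖ ^ 2 / (2 * ‖b‖ ^ 2) := by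
  have hb2 : (0:ℝ) < ‖b‖ ^ 2 := pow_pos (norm_pos_iff.mpr hb) 2
  set p := P (b - w) with hp
  have h1 : (inner ℝ p p : ℝ) = (inner ℝ (b - w) p : ℝ) := by
    rw [hp, hsym, hidem]
  have h2 : (inner ℝ p p : ℝ) = ‖p‖ ^ 2 := real_inner_self_eq_norm_sq p
  have h3 : (inner ℝ (b - w) p : ℝ) = (inner ℝ b p : ℝ) - (inner ℝ w p : ℝ) := inner_sub_left _ _ _
  have h4 : (inner ℝ p w : ℝ) = (inner ℝ w p : ℝ) := real_inner_comm _ _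
  simp only [fobj, inner_add_left, inner_add_right]
  rw [h2] at h1
  rw [h3] at h1
  rw [h4]
  rw [h1] at h2
  linear_combination (1/(2*‖b‖^2)) * h2 - (1/(2*‖b‖^2)) * h1 + (1/‖b‖^2) * h1

lemma fobj_lb {E : Type*} [NormedAddCommGroup E] [InnerProductSpace ℝ E]
    (b x : E) (hb : b ≠ 0) : -(1/2 : ℝ) ≤ fobj b x := by
  have hb2 : (0:ℝ) < ‖b‖ ^ 2 := pow_pos (norm_pos_iff.mpr hb) 2
  have h1 : (inner ℝ b x : ℝ) ≤ ‖b‖ * ‖x‖ := real_inner_le_norm b x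
  have h2 : (inner ℝ x x : ℝ) = ‖x‖ ^ 2 := real_inner_self_eq_norm_sq x
  unfold fobj
  rw [h2]
  have h5 : (1/‖b‖^2 : ℝ) * ((1/2)*‖x‖^2 - (inner ℝ b x : ℝ))
      = ((1/2)*‖x‖^2 - (inner ℝ b x : ℝ))/‖b‖^2 := by ring
  rw [h5, le_div_iff₀ hb2]
  nlinarith [sq_nonneg (‖x‖ - ‖b‖)]

/-- Along the ALS micro-iterates `v k μ` (with `v k d = v (k+1) 0` and
`v k (μ+1) = v k μ + Π_{k,μ}(b − v k μ)` for orthogonal projections `Π_{k,μ}`):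
the function values decrease by `(1/(2‖b‖²)) Σ_μ ‖Π_{k,μ} r_{k,μ}‖²`, are bounded below
by `−1/2`, hence converge; moreover `‖v_{k+1} − v_k‖² ≤ 2d‖b‖² Σ_μ (f(v_{k,μ}) − f(v_{k,μ+1}))`
and `‖v_{k+1} − v_k‖ → 0`. -/
theorem stmt19 {E : Type*} [NormedAddCommGroup E] [InnerProductSpace ℝ E]
    (d : ℕ) (b : E) (hb : b ≠ 0)
    (v : ℕ → ℕ → E) (hlink : ∀ k, v k d = v (k + 1) 0)
    (P : ℕ → ℕ → (E →ₗ[ℝ] E))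
    (hsym : ∀ k μ, ∀ x y : E, (inner ℝ (P k μ x) y : ℝ) = (inner ℝ x (P k μ y) : ℝ))
    (hidem : ∀ k μ, ∀ x : E, P k μ (P k μ x) = P k μ x)
    (hrec : ∀ k, ∀ μ < d, v k (μ + 1) = v k μ + P k μ (b - v k μ)) :
    (∀ k, fobj b (v (k + 1) 0) - fobj b (v k 0)
        = -(1 / (2 * ‖b‖ ^ 2)) * ∑ μ ∈ Finset.range d, ‖P k μ (b - v k μ)‖ ^ 2) ∧
      (∀ k, fobj b (v (k + 1) 0) ≤ fobj b (v k 0)) ∧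
      (∀ k, -(1 / 2) ≤ fobj b (v k 0)) ∧
      (∃ α : ℝ, Tendsto (fun k => fobj b (v k 0)) atTop (𝓝 α)) ∧
      (∀ k, ‖v (k + 1) 0 - v k 0‖ ^ 2
        ≤ 2 * d * ‖b‖ ^ 2 * ∑ μ ∈ Finset.range d, (fobj b (v k μ) - fobj b (v k (μ + 1)))) ∧
      Tendsto (fun k => ‖v (k + 1) 0 - v k 0‖) atTop (𝓝 0) := by
  have hb2 : (0:ℝ) < ‖b‖ ^ 2 := pow_pos (norm_pos_iff.mpr hb) 2
  -- micro-step decrease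
  have key : ∀ k, ∀ μ < d,
      fobj b (v k μ) - fobj b (v k (μ + 1)) = ‖P k μ (b - v k μ)‖ ^ 2 / (2 * ‖b‖ ^ 2) := by
    intro k μ hμ
    rw [hrec k μ hμ, fobj_step b (v k μ) hb (P k μ) (hsym k μ) (hidem k μ)]
    ring
  -- telescoping within a block
  have tele : ∀ k, ∑ μ ∈ Finset.range d, (fobj b (v k μ) - fobj b (v k (μ + 1)))
      = fobj b (v k 0) - fobj b (v (k + 1) 0) := by
    intro k
    rw [Finset.sum_range_sub' (fun μ => fobj b (v k μ)), hlink]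
  have sumnorm : ∀ k, ∑ μ ∈ Finset.range d, (fobj b (v k μ) - fobj b (v k (μ + 1)))
      = (1 / (2 * ‖b‖ ^ 2)) * ∑ μ ∈ Finset.range d, ‖P k μ (b - v k μ)‖ ^ 2 := by
    intro k
    rw [Finset.mul_sum]
    refine Finset.sum_congr rfl fun μ hμ => ?_
    rw [key k μ (Finset.mem_range.mp hμ)]
    ring
  have item1 : ∀ k, fobj b (v (k + 1) 0) - fobj b (v k 0)
      = -(1 / (2 * ‖b‖ ^ 2)) * ∑ μ ∈ Finset.range d, ‖P k μ (b - v k μ)‖ ^ 2 := by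
    intro k
    have := tele k
    rw [sumnorm k] at this
    linarith
  have sumnn : ∀ k, (0:ℝ) ≤ ∑ μ ∈ Finset.range d, ‖P k μ (b - v k μ)‖ ^ 2 := by
    intro k; exact Finset.sum_nonneg fun μ _ => sq_nonneg _
  have item2 : ∀ k, fobj b (v (k + 1) 0) ≤ fobj b (v k 0) := by
    intro k
    have h := item1 k
    have hc : (0:ℝ) < 1 / (2 * ‖b‖ ^ 2) := by positivity
    nlinarith [sumnn k]
  have item3 : ∀ k, -(1/2 : ℝ) ≤ fobj b (v k 0) := fun k => fobj_lb b _ hb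
  have anti : Antitone fun k => fobj b (v k 0) := antitone_nat_of_succ_le item2
  have bdd : BddBelow (Set.range fun k => fobj b (v k 0)) := by
    refine ⟨-(1/2), ?_⟩
    rintro x ⟨k, rfl⟩
    exact item3 k
  have item4 : ∃ α : ℝ, Tendsto (fun k => fobj b (v k 0)) atTop (𝓝 α) :=
    ⟨_, tendsto_atTop_ciInf anti bdd⟩
  -- item 5
  have diff_eq : ∀ k, v (k + 1) 0 - v k 0 = ∑ μ ∈ Finset.range d, (v k (μ + 1) - v k μ) := by
    intro k
    rw [Finset.sum_range_sub (fun μ => v k μ), hlink]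
  have item5 : ∀ k, ‖v (k + 1) 0 - v k 0‖ ^ 2
      ≤ 2 * d * ‖b‖ ^ 2 * ∑ μ ∈ Finset.range d, (fobj b (v k μ) - fobj b (v k (μ + 1))) := by
    intro k
    rw [sumnorm k, diff_eq k]
    have h1 : ‖∑ μ ∈ Finset.range d, (v k (μ + 1) - v k μ)‖
        ≤ ∑ μ ∈ Finset.range d, ‖v k (μ + 1) - v k μ‖ := norm_sum_le _ _
    have h2 : (∑ μ ∈ Finset.range d, ‖v k (μ + 1) - v k μ‖) ^ 2
        ≤ (d : ℝ) * ∑ μ ∈ Finset.range d, ‖v k (μ + 1) - v k μ‖ ^ 2 := by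
      have := Finset.sum_mul_sq_le_sq_mul_sq (Finset.range d)
        (fun _ => (1:ℝ)) (fun μ => ‖v k (μ + 1) - v k μ‖)
      simpa using this
    have h3 : ∑ μ ∈ Finset.range d, ‖v k (μ + 1) - v k μ‖ ^ 2
        = ∑ μ ∈ Finset.range d, ‖P k μ (b - v k μ)‖ ^ 2 := by
      refine Finset.sum_congr rfl fun μ hμ => ?_
      rw [hrec k μ (Finset.mem_range.mp hμ)]
      simp
    have h4 : ‖∑ μ ∈ Finset.range d, (v k (μ + 1) - v k μ)‖ ^ 2
        ≤ (∑ μ ∈ Finset.range d, ‖v k (μ + 1) - v k μ‖) ^ 2 := by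
      apply sq_le_sq' <;> nlinarith [norm_nonneg (∑ μ ∈ Finset.range d, (v k (μ + 1) - v k μ)),
        Finset.sum_nonneg (fun μ (_ : μ ∈ Finset.range d) => norm_nonneg (v k (μ + 1) - v k μ))]
    have hrhs : 2 * (d:ℝ) * ‖b‖ ^ 2 *
        ((1 / (2 * ‖b‖ ^ 2)) * ∑ μ ∈ Finset.range d, ‖P k μ (b - v k μ)‖ ^ 2)
        = (d:ℝ) * ∑ μ ∈ Finset.range d, ‖P k μ (b - v k μ)‖ ^ 2 := by
      field_simp
    rw [hrhs]
    calc ‖∑ μ ∈ Finset.range d, (v k (μ + 1) - v k μ)‖ ^ 2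
        ≤ (∑ μ ∈ Finset.range d, ‖v k (μ + 1) - v k μ‖) ^ 2 := h4
      _ ≤ (d : ℝ) * ∑ μ ∈ Finset.range d, ‖v k (μ + 1) - v k μ‖ ^ 2 := h2
      _ = (d : ℝ) * ∑ μ ∈ Finset.range d, ‖P k μ (b - v k μ)‖ ^ 2 := by rw [h3]
  -- item 6
  obtain ⟨α, hα⟩ := id item4
  have hdiff0 : Tendsto (fun k => fobj b (v k 0) - fobj b (v (k + 1) 0)) atTop (𝓝 0) := by
    have h2 : Tendsto (fun k => fobj b (v (k + 1) 0)) atTop (𝓝 α) :=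
      hα.comp (tendsto_add_atTop_nat 1)
    simpa using hα.sub h2
  have hsq0 : Tendsto (fun k => ‖v (k + 1) 0 - v k 0‖ ^ 2) atTop (𝓝 0) := by
    have hub : ∀ k, ‖v (k + 1) 0 - v k 0‖ ^ 2
        ≤ 2 * d * ‖b‖ ^ 2 * (fobj b (v k 0) - fobj b (v (k + 1) 0)) := by
      intro k
      have := item5 k
      rw [tele k] at this
      exact this
    have hbig : Tendsto (fun k => 2 * (d:ℝ) * ‖b‖ ^ 2 *
        (fobj b (v k 0) - fobj b (v (k + 1) 0))) atTop (𝓝 0) := by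
      have := hdiff0.const_mul (2 * (d:ℝ) * ‖b‖ ^ 2)
      simpa using this
    exact squeeze_zero (fun k => sq_nonneg _) hub hbig
  have item6 : Tendsto (fun k => ‖v (k + 1) 0 - v k 0‖) atTop (𝓝 0) := by
    have := hsq0.sqrt
    simp only [Real.sqrt_zero] at this
    convert this using 2 with k
    rw [Real.sqrt_sq (norm_nonneg _)]
  exact ⟨item1, item2, item3, item4, item5, item6⟩
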